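/- Let b > 0 and let S be a finite set of pairs (m,k) of integers with m ≥ 0 and k ≥ 1, with real coefficients a₁(m,k), a₂(m,k), a₃(m,k), a₄(m,k) for (m,k) ∈ S. Define α : ℝ² → ℝ by α(x,y) = Σ_{(m,k)∈S} [ a₁ cos(mx/b)cos(ky) + a₂ cos(mx/b)sin(ky) + a₃ sin(mx/b)cos(ky) + a₄ sin(mx/b)sin(ky) ], and ν : ℝ² → ℂ by ν(x,y) = Σ_{(m,k)∈S} (−i·k/(k² + (m/b)²))·[ a₁ cos(mx/b)sin(ky) − a₂ cos(mx/b)cos(ky) + a₃ sin(mx/b)sin(ky) − a₄ sin(mx/b)cos(ky) ], and set p = (1/2)·∂ν/∂x − (i/2)·∂ν/∂y. Then (1/2)·( ∂p/∂x + i·∂p/∂y ) = −(i/4)·∂α/∂y at every point of ℝ². -/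

import Mathlib

open Real

noncomputable def Tc (c₁ c₂ c₃ c₄ : ℂ) (w k : ℝ) (x y : ℝ) : ℂ :=
  c₁ * Real.cos (w * x) * Real.cos (k * y) + c₂ * Real.cos (w * x) * Real.sin (k * y)
  + c₃ * Real.sin (w * x) * Real.cos (k * y) + c₄ * Real.sin (w * x) * Real.sin (k * y)

lemma hccos (w x : ℝ) :
    HasDerivAt (fun x' : ℝ => ((Real.cos (w * x') : ℝ) : ℂ)) ((-Real.sin (w*x) * w : ℝ) : ℂ) x := by
  have h : HasDerivAt (fun x' : ℝ => Real.cos (w * x')) (-Real.sin (w*x) * w) x := by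
    simpa [Function.comp_def] using (Real.hasDerivAt_cos (w*x)).comp x ((hasDerivAt_id x).const_mul w)
  exact h.ofReal_comp

lemma hcsin (w x : ℝ) :
    HasDerivAt (fun x' : ℝ => ((Real.sin (w * x') : ℝ) : ℂ)) ((Real.cos (w*x) * w : ℝ) : ℂ) x := by
  have h : HasDerivAt (fun x' : ℝ => Real.sin (w * x')) (Real.cos (w*x) * w) x := by
    simpa [Function.comp_def] using (Real.hasDerivAt_sin (w*x)).comp x ((hasDerivAt_id x).const_mul w)
  exact h.ofReal_comp

lemma hTc_x (c₁ c₂ c₃ c₄ : ℂ) (w k : ℝ) (x y : ℝ) :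
    HasDerivAt (fun x' => Tc c₁ c₂ c₃ c₄ w k x' y)
      (Tc (w*c₃) (w*c₄) (-(w*c₁)) (-(w*c₂)) w k x y) x := by
  have h := ((((hccos w x).const_mul c₁).mul_const (Real.cos (k*y) : ℂ)).add
      (((hccos w x).const_mul c₂).mul_const (Real.sin (k*y) : ℂ))).add
      ((((hcsin w x).const_mul c₃).mul_const (Real.cos (k*y) : ℂ)).add
      (((hcsin w x).const_mul c₄).mul_const (Real.sin (k*y) : ℂ)))
  convert h using 1
  · rfl
  · funext x'; simp [Tc]; ring
  · simp [Tc]; ring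

lemma hTc_y (c₁ c₂ c₃ c₄ : ℂ) (w k : ℝ) (x y : ℝ) :
    HasDerivAt (fun y' => Tc c₁ c₂ c₃ c₄ w k x y')
      (Tc (k*c₂) (-(k*c₁)) (k*c₄) (-(k*c₃)) w k x y) y := by
  have h := ((((hccos k y).const_mul (c₁ * Real.cos (w*x))).add
      (((hcsin k y).const_mul (c₂ * Real.cos (w*x))))).add
      ((((hccos k y).const_mul (c₃ * Real.sin (w*x)))).add
      (((hcsin k y).const_mul (c₄ * Real.sin (w*x))))))
  convert h using 1
  · rfl
  · funext y'; simp [Tc]; ring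
  · simp [Tc]; ring

noncomputable def Tr (c₁ c₂ c₃ c₄ : ℝ) (w k : ℝ) (x y : ℝ) : ℝ :=
  c₁ * Real.cos (w * x) * Real.cos (k * y) + c₂ * Real.cos (w * x) * Real.sin (k * y)
  + c₃ * Real.sin (w * x) * Real.cos (k * y) + c₄ * Real.sin (w * x) * Real.sin (k * y)

lemma hTr_y (c₁ c₂ c₃ c₄ : ℝ) (w k : ℝ) (x y : ℝ) :
    HasDerivAt (fun y' => Tr c₁ c₂ c₃ c₄ w k x y')
      (Tr (k*c₂) (-(k*c₁)) (k*c₄) (-(k*c₃)) w k x y) y := by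
  have hc : HasDerivAt (fun y' : ℝ => Real.cos (k * y')) (-Real.sin (k*y) * k) y := by
    simpa [Function.comp_def] using (Real.hasDerivAt_cos (k*y)).comp y ((hasDerivAt_id y).const_mul k)
  have hs : HasDerivAt (fun y' : ℝ => Real.sin (k * y')) (Real.cos (k*y) * k) y := by
    simpa [Function.comp_def] using (Real.hasDerivAt_sin (k*y)).comp y ((hasDerivAt_id y).const_mul k)
  have h := (((hc.const_mul (c₁ * Real.cos (w*x))).add
      ((hs.const_mul (c₂ * Real.cos (w*x))))).add
      (((hc.const_mul (c₃ * Real.sin (w*x)))).add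
      ((hs.const_mul (c₄ * Real.sin (w*x))))))
  convert h using 1
  · rfl
  · rfl
  · funext y'; simp [Tr]; ring
  · simp [Tr]; ring

lemma sum_derivx (S : Finset (ℕ × ℕ)) (c₁ c₂ c₃ c₄ : ℕ × ℕ → ℂ) (w k : ℕ × ℕ → ℝ)
    (f : ℝ → ℝ → ℂ)
    (hf : ∀ x y, f x y = ∑ q ∈ S, Tc (c₁ q) (c₂ q) (c₃ q) (c₄ q) (w q) (k q) x y)
    (x y : ℝ) :
    deriv (fun x' => f x' y) x
      = ∑ q ∈ S, Tc (w q * c₃ q) (w q * c₄ q) (-(w q * c₁ q)) (-(w q * c₂ q)) (w q) (k q) x y := by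
  have : (fun x' => f x' y)
      = fun x' => ∑ q ∈ S, Tc (c₁ q) (c₂ q) (c₃ q) (c₄ q) (w q) (k q) x' y :=
    funext fun x' => hf x' y
  rw [this]
  exact (HasDerivAt.fun_sum fun q _ => hTc_x (c₁ q) (c₂ q) (c₃ q) (c₄ q) (w q) (k q) x y).deriv

lemma sum_derivy (S : Finset (ℕ × ℕ)) (c₁ c₂ c₃ c₄ : ℕ × ℕ → ℂ) (w k : ℕ × ℕ → ℝ)
    (f : ℝ → ℝ → ℂ)
    (hf : ∀ x y, f x y = ∑ q ∈ S, Tc (c₁ q) (c₂ q) (c₃ q) (c₄ q) (w q) (k q) x y)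
    (x y : ℝ) :
    deriv (fun y' => f x y') y
      = ∑ q ∈ S, Tc (k q * c₂ q) (-(k q * c₁ q)) (k q * c₄ q) (-(k q * c₃ q)) (w q) (k q) x y := by
  have : (fun y' => f x y')
      = fun y' => ∑ q ∈ S, Tc (c₁ q) (c₂ q) (c₃ q) (c₄ q) (w q) (k q) x y' :=
    funext fun y' => hf x y'
  rw [this]
  exact (HasDerivAt.fun_sum fun q _ => hTc_y (c₁ q) (c₂ q) (c₃ q) (c₄ q) (w q) (k q) x y).deriv

noncomputable def WW (b : ℝ) (q : ℕ × ℕ) : ℝ := (q.1 : ℝ) / b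
noncomputable def KK (q : ℕ × ℕ) : ℝ := (q.2 : ℝ)
noncomputable def CC (b : ℝ) (q : ℕ × ℕ) : ℂ :=
  -Complex.I * (q.2 : ℝ) / ((q.2 : ℝ) ^ 2 + ((q.1 : ℝ) / b) ^ 2)

noncomputable def PP₁ (b : ℝ) (a₁ a₄ : ℕ × ℕ → ℝ) (q : ℕ × ℕ) : ℂ :=
  (1/2) * (WW b q * (-(CC b q * a₄ q))) - (Complex.I/2) * (KK q * (CC b q * a₁ q))
noncomputable def PP₂ (b : ℝ) (a₂ a₃ : ℕ × ℕ → ℝ) (q : ℕ × ℕ) : ℂ :=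
  (1/2) * (WW b q * (CC b q * a₃ q)) + (Complex.I/2) * (KK q * (-(CC b q * a₂ q)))
noncomputable def PP₃ (b : ℝ) (a₂ a₃ : ℕ × ℕ → ℝ) (q : ℕ × ℕ) : ℂ :=
  (1/2) * (-(WW b q * (-(CC b q * a₂ q)))) - (Complex.I/2) * (KK q * (CC b q * a₃ q))
noncomputable def PP₄ (b : ℝ) (a₁ a₄ : ℕ × ℕ → ℝ) (q : ℕ × ℕ) : ℂ :=
  (1/2) * (-(WW b q * (CC b q * a₁ q))) + (Complex.I/2) * (KK q * (-(CC b q * a₄ q)))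

set_option maxHeartbeats 1000000 in
theorem dbar_equation_solution
    (b : ℝ) (hb : 0 < b)
    (S : Finset (ℕ × ℕ)) (hS : ∀ q ∈ S, 1 ≤ q.2)
    (a₁ a₂ a₃ a₄ : ℕ × ℕ → ℝ)
    (α : ℝ → ℝ → ℝ)
    (hα : ∀ x y, α x y = ∑ q ∈ S,
      (a₁ q * Real.cos (q.1 * x / b) * Real.cos (q.2 * y)
        + a₂ q * Real.cos (q.1 * x / b) * Real.sin (q.2 * y)
        + a₃ q * Real.sin (q.1 * x / b) * Real.cos (q.2 * y)
        + a₄ q * Real.sin (q.1 * x / b) * Real.sin (q.2 * y)))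
    (ν : ℝ → ℝ → ℂ)
    (hν : ∀ x y, ν x y = ∑ q ∈ S,
      (-Complex.I * (q.2 : ℝ) / ((q.2 : ℝ) ^ 2 + ((q.1 : ℝ) / b) ^ 2)) *
        ((a₁ q * Real.cos (q.1 * x / b) * Real.sin (q.2 * y)
          - a₂ q * Real.cos (q.1 * x / b) * Real.cos (q.2 * y)
          + a₃ q * Real.sin (q.1 * x / b) * Real.sin (q.2 * y)
          - a₄ q * Real.sin (q.1 * x / b) * Real.cos (q.2 * y) : ℝ) : ℂ))
    (p : ℝ → ℝ → ℂ)
    (hp : ∀ x y, p x y = (1 / 2) * deriv (fun x' => ν x' y) x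
        - (Complex.I / 2) * deriv (fun y' => ν x y') y) :
    ∀ x y, (1 / 2) * (deriv (fun x' => p x' y) x + Complex.I * deriv (fun y' => p x y') y)
      = -(Complex.I / 4) * ((deriv (fun y' => α x y') y : ℝ) : ℂ) := by
  have hν' : ∀ x y, ν x y = ∑ q ∈ S,
      Tc (-(CC b q * a₂ q)) (CC b q * a₁ q) (-(CC b q * a₄ q)) (CC b q * a₃ q)
        (WW b q) (KK q) x y := by
    intro x y
    rw [hν]
    refine Finset.sum_congr rfl fun q _ => ?_
    have harg : (q.1 : ℝ) * x / b = WW b q * x := by rw [WW]; ring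
    rw [harg]
    simp only [Tc, CC, WW, KK]
    push_cast
    ring
  have hp' : ∀ x y, p x y = ∑ q ∈ S,
      Tc (PP₁ b a₁ a₄ q) (PP₂ b a₂ a₃ q) (PP₃ b a₂ a₃ q) (PP₄ b a₁ a₄ q)
        (WW b q) (KK q) x y := by
    intro x y
    rw [hp, sum_derivx S _ _ _ _ (WW b) KK ν hν' x y, sum_derivy S _ _ _ _ (WW b) KK ν hν' x y,
      Finset.mul_sum, Finset.mul_sum, ← Finset.sum_sub_distrib]
    refine Finset.sum_congr rfl fun q _ => ?_
    simp only [Tc, PP₁, PP₂, PP₃, PP₄]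
    ring
  intro x y
  rw [sum_derivx S _ _ _ _ (WW b) KK p hp' x y, sum_derivy S _ _ _ _ (WW b) KK p hp' x y]
  have hα' : (fun y' => α x y') = fun y' => ∑ q ∈ S,
      Tr (a₁ q) (a₂ q) (a₃ q) (a₄ q) (WW b q) (KK q) x y' := by
    funext y'
    rw [hα]
    refine Finset.sum_congr rfl fun q _ => ?_
    have harg : (q.1 : ℝ) * x / b = WW b q * x := by rw [WW]; ring
    rw [harg]
    simp [Tr, KK]
  have hαd : deriv (fun y' => α x y') y = ∑ q ∈ S,
      Tr (KK q * a₂ q) (-(KK q * a₁ q)) (KK q * a₄ q) (-(KK q * a₃ q)) (WW b q) (KK q) x y := by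
    rw [hα']
    exact (HasDerivAt.fun_sum fun q _ => hTr_y (a₁ q) (a₂ q) (a₃ q) (a₄ q) (WW b q) (KK q) x y).deriv
  rw [hαd]
  push_cast [-Complex.ofReal_cos, -Complex.ofReal_sin]
  rw [Finset.mul_sum, Finset.mul_sum, ← Finset.sum_add_distrib, Finset.mul_sum]
  refine Finset.sum_congr rfl fun q hq => ?_
  have hk1 : (1 : ℝ) ≤ (q.2 : ℝ) := by exact_mod_cast hS q hq
  have hd : ((q.2 : ℝ) ^ 2 + ((q.1 : ℝ) / b) ^ 2) ≠ 0 := by positivity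
  have hdC : ((q.2 : ℂ) ^ 2 + ((q.1 : ℂ) / (b : ℂ)) ^ 2) ≠ 0 := by
    have h := Complex.ofReal_ne_zero.2 hd
    push_cast at h
    exact h
  have hbC : (b : ℂ) ≠ 0 := by exact_mod_cast hb.ne'
  have key : CC b q * (((KK q : ℝ) : ℂ)^2 + ((WW b q : ℝ) : ℂ)^2)
      = -Complex.I * ((KK q : ℝ) : ℂ) := by
    simp only [CC, KK, WW]
    push_cast
    exact div_mul_cancel₀ _ hdC
  simp only [Tc, Tr, PP₁, PP₂, PP₃, PP₄, Complex.ofReal_add, Complex.ofReal_sub,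
    Complex.ofReal_mul, Complex.ofReal_neg]
  linear_combination (((a₂ q : ℝ) : ℂ)/4 * ((Real.cos (WW b q * x) : ℝ) : ℂ)
        * ((Real.cos (KK q * y) : ℝ) : ℂ)
      - ((a₁ q : ℝ) : ℂ)/4 * ((Real.cos (WW b q * x) : ℝ) : ℂ) * ((Real.sin (KK q * y) : ℝ) : ℂ)
      + ((a₄ q : ℝ) : ℂ)/4 * ((Real.sin (WW b q * x) : ℝ) : ℂ) * ((Real.cos (KK q * y) : ℝ) : ℂ)
      - ((a₃ q : ℝ) : ℂ)/4 * ((Real.sin (WW b q * x) : ℝ) : ℂ) * ((Real.sin (KK q * y) : ℝ) : ℂ))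
    * key
    + (CC b q * ((KK q : ℝ) : ℂ)^2 *
        (-(((a₂ q : ℝ) : ℂ))/4 * ((Real.cos (WW b q * x) : ℝ) : ℂ) * ((Real.cos (KK q * y) : ℝ) : ℂ)
        + ((a₁ q : ℝ) : ℂ)/4 * ((Real.cos (WW b q * x) : ℝ) : ℂ) * ((Real.sin (KK q * y) : ℝ) : ℂ)
        - ((a₄ q : ℝ) : ℂ)/4 * ((Real.sin (WW b q * x) : ℝ) : ℂ) * ((Real.cos (KK q * y) : ℝ) : ℂ)
        + ((a₃ q : ℝ) : ℂ)/4 * ((Real.sin (WW b q * x) : ℝ) : ℂ) * ((Real.sin (KK q * y) : ℝ) : ℂ)))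
      * Complex.I_sq
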